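/- Let q = 4 and n = 1 + q^a + q^b + q^e + q^{e+k} with a, b, e, k positive integers. Then g_{n,q} ≡ S_a S_b + (S_a + S_b + S_e) S_k + S_e² (mod X^{q^e} − X). Moreover, if gcd(e, 2k) = 1 and (a = k or b = k), then g_{n,q} is a permutation polynomial of F_{q^e}. -/

import Mathlib

open Polynomial Finset

section CharTwoAux
variable {R : Type*} [CommRing R]

lemma aux_sq (h2 : (2:R) = 0) (p q : R) : (p+q)^2 = p^2 + q^2 := by
  linear_combination (p*q) * h2

lemma aux_pow4 (h2 : (2:R) = 0) (p q : R) : (p+q)^4 = p^4 + q^4 := by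
  linear_combination (2*p^3*q + 3*p^2*q^2 + 2*p*q^3) * h2

lemma aux_frob (h2 : (2:R) = 0) (p q : R) (j : ℕ) :
    (p+q)^(4^j) = p^(4^j) + q^(4^j) := by
  induction j with
  | zero => simp
  | succ j ih => rw [pow_succ, pow_mul, pow_mul, pow_mul, ih, aux_pow4 h2]

lemma aux_neg (h2 : (2:R) = 0) (p : R) : -p = p := by linear_combination (-p) * h2

lemma aux_sum_sq (h2 : (2:R) = 0) {ι : Type*} (s : Finset ι) (f : ι → R) :
    (∑ i ∈ s, f i)^2 = ∑ i ∈ s, (f i)^2 := by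
  induction s using Finset.cons_induction with
  | empty => simp
  | cons a s ha ih => rw [Finset.sum_cons, Finset.sum_cons, aux_sq h2, ih]

lemma aux_sum_pow4 (h2 : (2:R) = 0) {ι : Type*} (s : Finset ι) (f : ι → R) :
    (∑ i ∈ s, f i)^4 = ∑ i ∈ s, (f i)^4 := by
  induction s using Finset.cons_induction with
  | empty => simp
  | cons a s ha ih => rw [Finset.sum_cons, Finset.sum_cons, aux_pow4 h2, ih]

lemma aux_sq_inj {F : Type*} [Field F] (h2 : (2:F) = 0) {u v : F}
    (h : u^2 = v^2) : u = v := by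
  have h0 : (u - v)^2 = 0 := by linear_combination h + (v^2 - u*v) * h2
  exact sub_eq_zero.mp (pow_eq_zero_iff (n := 2) (by norm_num) |>.mp h0)

lemma pow4_fix {t : R} (ht : t^4 = t) (j : ℕ) : t^(4^j) = t := by
  induction j with
  | zero => simp
  | succ j ih => rw [pow_succ, pow_mul, ih, ht]
end CharTwoAux

lemma sumK1 (K : Type*) [Field K] [Fintype K] (hK : Fintype.card K = 4) :
    ∑ c : K, c = 0 := by
  classical
  obtain ⟨u, hu0, hu1⟩ : ∃ u : K, u ≠ 0 ∧ u ≠ 1 := by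
    by_contra h
    push_neg at h
    have hsub : (Finset.univ : Finset K) ⊆ {0, 1} := by
      intro x _
      rcases eq_or_ne x 0 with h0 | h0
      · simp [h0]
      · simp [h x h0]
    have hle := Finset.card_le_card hsub
    have h2 : ({0,1} : Finset K).card ≤ 2 := Finset.card_insert_le _ _ |>.trans (by simp)
    rw [Finset.card_univ, hK] at hle; omega
  have hbij : Function.Bijective (fun c : K => u * c) :=
    Finite.injective_iff_bijective.mp (mul_right_injective₀ hu0)
  have hs : ∑ c : K, u * c = ∑ c : K, c :=
    Fintype.sum_bijective _ hbij (fun c => u * c) (fun c => c) (fun _ => rfl)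
  rw [← Finset.mul_sum] at hs
  have : (u - 1) * ∑ c : K, c = 0 := by linear_combination hs
  rcases mul_eq_zero.mp this with h | h
  · exact absurd (sub_eq_zero.mp h) hu1
  · exact h

lemma sumK3 (K : Type*) [Field K] [Fintype K] (hK : Fintype.card K = 4)
    (h2 : (2:K) = 0) : ∑ c : K, c^3 = 1 := by
  classical
  rw [← Finset.sum_erase_add _ _ (Finset.mem_univ (0:K))]
  have h1 : ∀ c ∈ Finset.univ.erase (0:K), c^3 = 1 := by
    intro c hc
    have hc0 : c ≠ 0 := (Finset.mem_erase.mp hc).1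
    have := FiniteField.pow_card_sub_one_eq_one c hc0
    rwa [hK] at this
  rw [Finset.sum_congr rfl h1, Finset.sum_const, Finset.card_erase_of_mem (Finset.mem_univ _),
    Finset.card_univ, hK]
  norm_num
  linear_combination h2

def sfun {E : Type*} [CommRing E] (d : ℕ) (x : E) : E := ∑ i ∈ Finset.range d, x^(4^i)

section SfunLemmas
variable {E : Type*} [CommRing E]

lemma sfun_add (h2 : (2:E) = 0) (d : ℕ) (x y : E) : sfun d (x+y) = sfun d x + sfun d y := by
  unfold sfun
  rw [← Finset.sum_add_distrib]
  exact Finset.sum_congr rfl fun i _ => aux_frob h2 x y i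

lemma sfun_pow4 (h2 : (2:E) = 0) (d : ℕ) (x : E) : (sfun d x)^4 = sfun d x + x^(4^d) - x := by
  have h1 : (sfun d x)^4 = ∑ i ∈ Finset.range d, x^(4^(i+1)) := by
    rw [sfun, aux_sum_pow4 h2]
    exact Finset.sum_congr rfl fun i _ => by rw [← pow_mul, ← pow_succ]
  have h2' : ∑ i ∈ Finset.range (d+1), x^(4^i)
      = (∑ i ∈ Finset.range d, x^(4^(i+1))) + x := by
    rw [Finset.sum_range_succ']
    norm_num
  have h3 : ∑ i ∈ Finset.range (d+1), x^(4^i) = sfun d x + x^(4^d) := by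
    rw [Finset.sum_range_succ]; rfl
  rw [h1]
  rw [h3] at h2'
  linear_combination -h2'

lemma sfun_sq (h2 : (2:E) = 0) (d : ℕ) (x : E) : sfun d (x^2) = (sfun d x)^2 := by
  rw [sfun, sfun, aux_sum_sq h2]
  exact Finset.sum_congr rfl fun i _ => by rw [← pow_mul, ← pow_mul, mul_comm]

lemma sfun_fr (h2 : (2:E) = 0) (d : ℕ) (x : E) : sfun d (x^4) = (sfun d x)^4 := by
  rw [sfun, sfun, aux_sum_pow4 h2]
  exact Finset.sum_congr rfl fun i _ => by rw [← pow_mul, ← pow_mul, mul_comm]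

lemma sfun_mul_fix {t : E} (ht : t^4 = t) (d : ℕ) (y : E) :
    sfun d (t*y) = t * sfun d y := by
  rw [sfun, sfun, Finset.mul_sum]
  exact Finset.sum_congr rfl fun i _ => by rw [mul_pow, pow4_fix ht]

lemma sfun_finsum (h2 : (2:E) = 0) {ι : Type*} (d : ℕ) (u : Finset ι) (f : ι → E) :
    sfun d (∑ j ∈ u, f j) = ∑ j ∈ u, sfun d (f j) := by
  induction u using Finset.cons_induction with
  | empty => simp [sfun]
  | cons a s ha ih => rw [Finset.sum_cons, Finset.sum_cons, sfun_add h2, ih]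

end SfunLemmas

-- elementary symmetric expansion
def e1p {R : Type*} [CommRing R] (x pa pb pe pk : R) : R := x + pa + pb + pe + pk
def e2p {R : Type*} [CommRing R] (x pa pb pe pk : R) : R :=
  x*pa + x*pb + x*pe + x*pk + pa*pb + pa*pe + pa*pk + pb*pe + pb*pk + pe*pk
def e3p {R : Type*} [CommRing R] (x pa pb pe pk : R) : R :=
  x*pa*pb + x*pa*pe + x*pa*pk + x*pb*pe + x*pb*pk + x*pe*pk
  + pa*pb*pe + pa*pb*pk + pa*pe*pk + pb*pe*pk
def e4p {R : Type*} [CommRing R] (x pa pb pe pk : R) : R :=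
  x*pa*pb*pe + x*pa*pb*pk + x*pa*pe*pk + x*pb*pe*pk + pa*pb*pe*pk
def e5p {R : Type*} [CommRing R] (x pa pb pe pk : R) : R := x*pa*pb*pe*pk

lemma expand5 {R : Type*} [CommRing R] (x pa pb pe pk t : R) :
    (x+t)*(pa+t)*(pb+t)*(pe+t)*(pk+t)
      = e5p x pa pb pe pk + e4p x pa pb pe pk * t + e3p x pa pb pe pk * t^2
        + e2p x pa pb pe pk * t^3 + e1p x pa pb pe pk * t^4 + t^5 := by
  unfold e1p e2p e3p e4p e5p; ring

/-- Proposition 3.3: for `q = 4` and `n = 1 + q^a + q^b + q^e + q^{e+k}` (with `a,b,e,k`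
positive), `g_{n,q} ≡ S_a S_b + (S_a + S_b + S_e)S_k + S_e² (mod X^{q^e} − X)`; moreover
if `gcd(e, 2k) = 1` and `a = k` or `b = k`, then `g_{n,q}` permutes `F_{q^e}`. -/
theorem stmt13 (e a b k : ℕ) (he : 0 < e) (ha : 0 < a) (hb : 0 < b) (hk : 0 < k)
    (E : Type*) [Field E] [Fintype E] (hE : Fintype.card E = 4 ^ e)
    (F4 : Subfield E) [Fintype F4] (hF4 : Fintype.card F4 = 4)
    (n : ℕ) (hn : n = 1 + 4 ^ a + 4 ^ b + 4 ^ e + 4 ^ (e + k))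
    (g : Polynomial E)
    (hg : ∑ c : F4, (X + C (c : E)) ^ n = g.comp (X ^ 4 - X))
    (S : ℕ → Polynomial E) (hS : ∀ d, S d = ∑ i ∈ Finset.range d, X ^ 4 ^ i) :
    (X ^ 4 ^ e - X) ∣ g - (S a * S b + (S a + S b + S e) * S k + S e ^ 2) ∧
    (Nat.gcd e (2 * k) = 1 → a = k ∨ b = k → Function.Bijective fun x : E => g.eval x) := by
  classical
  -- characteristic 2
  have h2E : (2:E) = 0 := by
    have hc := FiniteField.cast_card_eq_zero E
    rw [hE] at hc
    push_cast at hc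
    have h4 : (4:E) = 0 := pow_eq_zero_iff he.ne' |>.mp hc
    have : (2:E)^2 = 0 := by rw [show (2:E)^2 = 4 by norm_num, h4]
    exact pow_eq_zero_iff (by norm_num) |>.mp this
  have h2P : (2:E[X]) = 0 := by
    rw [← map_ofNat (C : E →+* E[X]) 2, h2E, map_zero]
  -- x^(4^e) = x in E
  have hxE : ∀ x : E, x^(4^e) = x := by
    intro x
    have := FiniteField.pow_card x
    rwa [hE] at this
  -- c^4 = c for c in F4
  have hc4 : ∀ c : F4, ((c:E))^4 = (c:E) := by
    intro c
    have h : c^4 = c := by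
      have := FiniteField.pow_card c
      rwa [hF4] at this
    calc ((c:E))^4 = ((c^4 : F4) : E) := by push_cast; ring
    _ = (c:E) := by rw [h]
  have hc4j : ∀ (c : F4) (j:ℕ), ((c:E))^(4^j) = (c:E) := fun c j => pow4_fix (hc4 c) j
  -- sums over F4
  have hcoe_sum : ∀ m : ℕ, ∑ c : F4, ((c:E))^m = (((∑ c : F4, c^m : F4)) : E) := by
    intro m
    push_cast
    ring
  have hs1E : ∑ c : F4, ((c:E))^1 = 0 := by
    rw [hcoe_sum]
    simp only [pow_one, sumK1 F4 hF4]
    exact ZeroMemClass.coe_zero F4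
  have h2F4 : (2:F4) = 0 := by
    have h := F4.subtype.injective
    apply h
    rw [map_ofNat, map_zero, h2E]
  have hsqbij : Function.Bijective (fun c : F4 => c^2) :=
    Finite.injective_iff_bijective.mp (fun u v huv => aux_sq_inj h2F4 huv)
  have hsum2 : ∑ c : F4, c^2 = (0:F4) := by
    have := Fintype.sum_bijective _ hsqbij (fun c : F4 => c^2) (fun c => c) (fun _ => rfl)
    rw [this, sumK1 F4 hF4]
  have hs2E : ∑ c : F4, ((c:E))^2 = 0 := by
    rw [hcoe_sum, hsum2]; exact ZeroMemClass.coe_zero F4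
  have hs3E : ∑ c : F4, ((c:E))^3 = 1 := by
    rw [hcoe_sum, sumK3 F4 hF4 h2F4]; exact OneMemClass.coe_one F4
  have hs4E : ∑ c : F4, ((c:E))^4 = 0 := by
    calc ∑ c : F4, ((c:E))^4 = ∑ c : F4, ((c:E))^1 :=
          Finset.sum_congr rfl fun c _ => by rw [hc4 c, pow_one]
    _ = 0 := hs1E
  have hs5E : ∑ c : F4, ((c:E))^5 = 0 := by
    calc ∑ c : F4, ((c:E))^5 = ∑ c : F4, ((c:E))^2 := by
          refine Finset.sum_congr rfl fun c _ => ?_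
          rw [show (5:ℕ) = 4 + 1 by norm_num, pow_add, hc4 c, pow_one, ← pow_two]
    _ = 0 := hs2E
  -- step 1 : factor (X + C c)^n
  have hstep1 : ∀ c : F4, (X + C (c:E))^n
      = (X + C (c:E)) * ((X:E[X])^(4^a) + C (c:E)) * ((X:E[X])^(4^b) + C (c:E))
        * ((X:E[X])^(4^e) + C (c:E)) * ((X:E[X])^(4^(e+k)) + C (c:E)) := by
    intro c
    have hfr : ∀ j : ℕ, (X + C (c:E))^(4^j) = (X:E[X])^(4^j) + C (c:E) := by
      intro j
      rw [aux_frob h2P, ← map_pow, hc4j]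
    rw [hn, pow_add, pow_add, pow_add, pow_add, pow_one, hfr, hfr, hfr, hfr]
  -- the sum equals e2p
  have hf : ∑ c : F4, (X + C (c:E))^n
      = e2p (X:E[X]) ((X:E[X])^(4^a)) ((X:E[X])^(4^b)) ((X:E[X])^(4^e)) ((X:E[X])^(4^(e+k))) := by
    have hrw : ∀ c : F4, (X + C (c:E))^n
        = e5p (X:E[X]) (X^(4^a)) (X^(4^b)) (X^(4^e)) (X^(4^(e+k)))
          + e4p (X:E[X]) (X^(4^a)) (X^(4^b)) (X^(4^e)) (X^(4^(e+k))) * C (c:E)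
          + e3p (X:E[X]) (X^(4^a)) (X^(4^b)) (X^(4^e)) (X^(4^(e+k))) * (C (c:E))^2
          + e2p (X:E[X]) (X^(4^a)) (X^(4^b)) (X^(4^e)) (X^(4^(e+k))) * (C (c:E))^3
          + e1p (X:E[X]) (X^(4^a)) (X^(4^b)) (X^(4^e)) (X^(4^(e+k))) * (C (c:E))^4
          + (C (c:E))^5 := fun c => by rw [hstep1 c, expand5]
    rw [Finset.sum_congr rfl fun c _ => hrw c]
    rw [Finset.sum_add_distrib, Finset.sum_add_distrib, Finset.sum_add_distrib,
      Finset.sum_add_distrib, Finset.sum_add_distrib, ← Finset.mul_sum, ← Finset.mul_sum,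
      ← Finset.mul_sum, ← Finset.mul_sum]
    have hCpow : ∀ m : ℕ, ∑ c : F4, (C ((c:E)))^m = C (∑ c : F4, ((c:E))^m) := by
      intro m
      rw [map_sum]
      exact Finset.sum_congr rfl fun c _ => by rw [C_pow]
    have hC1 : ∑ c : F4, C ((c:E)) = 0 := by
      have h := hCpow 1
      rw [hs1E, map_zero] at h
      simpa using h
    rw [Finset.sum_const, Finset.card_univ, hF4, hCpow, hCpow, hCpow, hCpow, hC1, hs2E, hs3E, hs4E, hs5E]
    simp only [map_zero, map_one, mul_zero, mul_one, add_zero, zero_add]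
    have h40 : (4:ℕ) • e5p (X:E[X]) (X^(4^a)) (X^(4^b)) (X^(4^e)) (X^(4^(e+k))) = 0 := by
      rw [nsmul_eq_mul]
      have : ((4:ℕ):E[X]) = 0 := by push_cast; linear_combination 2 * h2P
      rw [this, zero_mul]
    rw [h40, zero_add]
  -- composition identity for S d
  have hcompS : ∀ d : ℕ, (S d).comp (X^4 - X) = (X:E[X])^(4^d) - X := by
    intro d
    induction d with
    | zero =>
      rw [hS 0]
      simp
    | succ d ih =>
      have hSd : S (d+1) = S d + X^(4^d) := by
        rw [hS (d+1), hS d, Finset.sum_range_succ]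
      rw [hSd, add_comp, ih, X_pow_comp]
      have hb4 : ((X:E[X])^4 - X)^(4^d) = X^(4^(d+1)) + X^(4^d) := by
        rw [sub_eq_add_neg, aux_neg h2P, aux_frob h2P, ← pow_mul, ← pow_succ']
      rw [hb4]
      linear_combination (X:E[X])^(4^d) * h2P
  -- determine g
  have hg_eq : g = S a * S b + (S a + S b) * (S e + S (e+k)) + S e * S (e+k) := by
    have hGcomp : (S a * S b + (S a + S b) * (S e + S (e+k)) + S e * S (e+k)).comp (X^4 - X)
        = e2p (X:E[X]) ((X:E[X])^(4^a)) ((X:E[X])^(4^b)) ((X:E[X])^(4^e)) ((X:E[X])^(4^(e+k))) := by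
      simp only [add_comp, mul_comp, hcompS]
      unfold e2p
      linear_combination (3*(X:E[X])^2 - 2*X*(X^(4^a) + X^(4^b) + X^(4^e) + X^(4^(e+k)))) * h2P
    have h1 : g.comp (X^4 - X)
        = (S a * S b + (S a + S b) * (S e + S (e+k)) + S e * S (e+k)).comp (X^4 - X) := by
      rw [← hg, hf, hGcomp]
    have hsub : (g - (S a * S b + (S a + S b) * (S e + S (e+k)) + S e * S (e+k))).comp
        (X^4 - X) = 0 := by
      rw [sub_comp, h1, sub_self]
    have hdeg : ((X:E[X])^4 - X) ≠ C (((X:E[X])^4 - X).coeff 0) := by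
      intro hcon
      have hnd : ((X:E[X])^4 - X).natDegree = 4 := by compute_degree!
      rw [hcon] at hnd
      simp [natDegree_C] at hnd
    rcases comp_eq_zero_iff.mp hsub with h | ⟨_, h⟩
    · exact sub_eq_zero.mp h
    · exact absurd h hdeg
  -- key divisibility
  have hdvdD : (X^(4^e) - X : E[X]) ∣ S (e+k) - (S e + S k) := by
    have hsplit : S (e+k) - (S e + S k)
        = ∑ i ∈ Finset.range k, ((X:E[X])^(4^(e+i)) - X^(4^i)) := by
      rw [hS (e+k), hS e, hS k, Finset.sum_range_add, Finset.sum_sub_distrib]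
      ring
    rw [hsplit]
    refine Finset.dvd_sum fun i _ => ?_
    have hpow : ((X:E[X])^(4^e) - X)^(4^i) = X^(4^(e+i)) - X^(4^i) := by
      rw [sub_eq_add_neg, aux_neg h2P, aux_frob h2P, ← pow_mul, ← pow_add,
        sub_eq_add_neg, aux_neg h2P]
    rw [← hpow]
    exact dvd_pow_self _ (pow_pos (by norm_num : (0:ℕ) < 4) i).ne'
  obtain ⟨w, hw⟩ := hdvdD
  have hdvd : (X ^ 4 ^ e - X) ∣ g - (S a * S b + (S a + S b + S e) * S k + S e ^ 2) := by
    refine ⟨(S a + S b + S e) * w, ?_⟩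
    rw [hg_eq]
    linear_combination (S a + S b + S e) * hw + ((S a + S b) * S e) * h2P
  refine ⟨hdvd, ?_⟩
  intro hgcd hab
  -- parity and coprimality facts
  have heodd : e % 2 = 1 := by
    rcases Nat.even_or_odd e with hev | hod
    · exfalso
      have h2d : (2:ℕ) ∣ Nat.gcd e (2*k) := Nat.dvd_gcd hev.two_dvd (dvd_mul_right 2 k)
      rw [hgcd] at h2d
      exact absurd h2d (by norm_num)
    · exact Nat.odd_iff.mp hod
  have hcoek : Nat.Coprime e k :=
    Nat.Coprime.coprime_dvd_right (dvd_mul_left k 2) hgcd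
  have heE : ((e:ℕ):E) = 1 := by
    obtain ⟨m, hm⟩ : ∃ m, e = 2*m+1 := ⟨e/2, by omega⟩
    rw [hm]; push_cast; rw [h2E]; ring
  have hkE : (k:E) * ((k:E)+1) = 0 := by
    obtain ⟨m, hm⟩ := Nat.even_mul_succ_self k
    have h0 : ((k*(k+1):ℕ):E) = 0 := by
      rw [hm]; push_cast; linear_combination (m:E) * h2E
    calc (k:E) * ((k:E)+1) = ((k*(k+1):ℕ):E) := by push_cast; ring
    _ = 0 := h0
  -- evaluation lemmas
  have hSeval : ∀ (d : ℕ) (x : E), (S d).eval x = sfun d x := by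
    intro d x
    rw [hS, sfun]
    simp [eval_finset_sum]
  have hs4fixE : ∀ x : E, (sfun e x)^4 = sfun e x := by
    intro x
    rw [sfun_pow4 h2E, hxE]
    ring
  have hconstE : ∀ t : E, t^4 = t → sfun e t = t := by
    intro t ht
    calc sfun e t = ∑ _i ∈ Finset.range e, t :=
          Finset.sum_congr rfl fun i _ => pow4_fix ht i
    _ = e • t := by rw [Finset.sum_const, Finset.card_range]
    _ = t := by rw [nsmul_eq_mul, heE, one_mul]
  have hshiftE : ∀ (x : E) (j : ℕ), sfun e (x^(4^j)) = sfun e x := by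
    intro x j
    induction j with
    | zero => simp
    | succ j ih => rw [pow_succ, pow_mul, sfun_fr h2E, hs4fixE, ih]
  have hseskE : ∀ x : E, sfun e (sfun k x) = (k:E) * sfun e x := by
    intro x
    have h1 : sfun e (sfun k x) = ∑ j ∈ Finset.range k, sfun e (x^(4^j)) := by
      rw [show sfun k x = ∑ j ∈ Finset.range k, x^(4^j) from rfl, sfun_finsum h2E]
    rw [h1, Finset.sum_congr rfl fun j _ => hshiftE x j, Finset.sum_const, Finset.card_range,
      nsmul_eq_mul]
  -- the function is x ↦ sk(x)² + se(x) sk(x) + se(x)²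
  have hval : (fun x : E => g.eval x)
      = fun x => (sfun k x)^2 + sfun e x * sfun k x + (sfun e x)^2 := by
    funext x
    obtain ⟨w2, hw2⟩ := hdvd
    have hrepr : g = (S a * S b + (S a + S b + S e) * S k + S e^2) + (X^(4^e) - X) * w2 := by
      linear_combination hw2
    have hgx : g.eval x = (S a * S b + (S a + S b + S e) * S k + S e^2).eval x := by
      rw [hrepr]
      simp only [eval_add, eval_mul, eval_sub, eval_pow, eval_X]
      rw [hxE x]
      ring
    rw [hgx]
    simp only [eval_add, eval_mul, eval_pow, hSeval]
    rcases hab with h | h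
    · rw [h]
      linear_combination (sfun b x * sfun k x) * h2E
    · rw [h]
      linear_combination (sfun a x * sfun k x) * h2E
  rw [hval]
  refine Finite.injective_iff_bijective.mp ?_
  intro x x' hxx'
  dsimp only at hxx'
  have htr : ∀ y : E, sfun e ((sfun k y)^2 + sfun e y * sfun k y + (sfun e y)^2)
      = (sfun e y)^2 := by
    intro y
    have ht4 : (sfun e y)^4 = sfun e y := hs4fixE y
    rw [sfun_add h2E, sfun_add h2E, sfun_sq h2E, sfun_sq h2E, sfun_mul_fix ht4,
      hseskE, hconstE _ ht4]
    linear_combination (sfun e y)^2 * hkE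
  have hteq : sfun e x = sfun e x' := by
    have h1 := htr x
    have h2' := htr x'
    rw [hxx', h2'] at h1
    exact (aux_sq_inj h2E h1).symm
  have hsez : sfun e (x + x') = 0 := by
    rw [sfun_add h2E, hteq]
    linear_combination (sfun e x') * h2E
  have hquad : (sfun k (x+x')) * (sfun k (x+x') + sfun e x) = 0 := by
    rw [← hteq] at hxx'
    rw [sfun_add h2E]
    linear_combination hxx' + ((sfun k x')^2 + sfun k x * sfun k x' + sfun e x * sfun k x') * h2E
  have hw4 : (sfun k (x+x'))^4 = sfun k (x+x') := by
    rcases mul_eq_zero.mp hquad with h | h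
    · rw [h]; ring
    · have hzt : sfun k (x+x') = sfun e x := by linear_combination h - (sfun e x) * h2E
      rw [hzt]; exact hs4fixE x
  have hzk : (x+x')^(4^k) = x+x' := by
    have hp := sfun_pow4 h2E k (x+x')
    rw [hw4] at hp
    linear_combination -hp
  have hz4 : (x+x')^4 = x+x' := by
    by_cases he1 : e = 1
    · have h := hxE (x+x')
      rw [he1, pow_one] at h
      exact h
    · have he2 : 1 < e := by omega
      obtain ⟨u, -, hu⟩ := Nat.exists_mul_mod_eq_one_of_coprime (Nat.Coprime.symm hcoek) he2
      have hmulk : ∀ m : ℕ, (x+x')^(4^(m*k)) = x+x' := by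
        intro m
        induction m with
        | zero => simp
        | succ m ih => rw [Nat.succ_mul, pow_add, pow_mul, ih, hzk]
      have hmule : ∀ m : ℕ, (x+x')^(4^(m*e)) = x+x' := by
        intro m
        induction m with
        | zero => simp
        | succ m ih => rw [Nat.succ_mul, pow_add, pow_mul, ih, hxE]
      have h1 : (x+x')^(4^(k*u)) = x+x' := by rw [mul_comm k u]; exact hmulk u
      have h := Nat.div_add_mod (k*u) e
      rw [hu] at h
      have hdiv : (k*u/e)*e + 1 = k*u := by rw [mul_comm]; exact h
      rw [← hdiv, pow_add, pow_one, pow_mul, hmule] at h1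
      exact h1
  have hz0 : x + x' = 0 := by rw [← hsez, hconstE _ hz4]
  linear_combination hz0 - x' * h2E
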